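/- Let A be an n×n nonnegative matrix, S(A) the matrix with entries Sign(a_{ij}) ∈ {0,1}, and μ*(A) = max_σ μ_σ(A) over all cycles σ. Then ρ(A) ≤ ρ(S(A)) · μ*(A). -/

import Mathlib

section Walks
variable {n : ℕ} (hn : 0 < n) (A : Matrix (Fin n) (Fin n) ℝ)
  (hA : ∀ i j, 0 ≤ A i j) (c : ℝ) (hc : 0 < c)
  (hcyc : ∀ (m : ℕ) (f : Fin (m + 1) → Fin n), Function.Injective f →
      (∏ j : Fin (m + 1), A (f j) (f (j + 1))) ≤ c ^ (m + 1))

/-- walk product of `A/c` along `G` for `k` steps -/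
noncomputable def wp (G : ℕ → Fin n) (k : ℕ) : ℝ :=
  ∏ t ∈ Finset.range k, (A (G t) (G (t + 1)) / c)

include hA hc in
theorem wp_nonneg (G : ℕ → Fin n) (k : ℕ) : 0 ≤ wp A c G k :=
  Finset.prod_nonneg fun t _ => div_nonneg (hA _ _) hc.le

theorem wp_congr {G H : ℕ → Fin n} {k : ℕ} (h : ∀ t ≤ k, G t = H t) :
    wp A c G k = wp A c H k := by
  refine Finset.prod_congr rfl fun t ht => ?_
  rw [Finset.mem_range] at ht
  rw [h t (le_of_lt ht), h (t + 1) ht]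

include hn hA hc hcyc in
/-- cut-a-cycle reduction: any walk is dominated by a short walk to the same endpoint -/
theorem wp_reduce : ∀ (L : ℕ) (G : ℕ → Fin n), ∃ (k : ℕ) (H : ℕ → Fin n),
    k < n ∧ H k = G L ∧ wp A c G L ≤ wp A c H k := by
  intro L
  induction L using Nat.strong_induction_on with
  | _ L IH =>
  intro G
  rcases lt_or_ge L n with hL | hL
  · exact ⟨L, G, hL, rfl, le_rfl⟩
  · have hrep : ∃ b, (∃ a, a < b ∧ b ≤ L ∧ G a = G b) := by
      have hni : ¬ Function.Injective (fun t : Fin (n + 1) => G t.val) := by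
        intro hinj
        have := Fintype.card_le_of_injective _ hinj
        simp at this
      rw [Function.not_injective_iff] at hni
      obtain ⟨x, y, hxy, hne⟩ := hni
      rcases hne.lt_or_gt with h | h
      · exact ⟨y.val, x.val, h, le_trans (Nat.lt_succ_iff.mp y.isLt) hL, hxy⟩
      · exact ⟨x.val, y.val, h, le_trans (Nat.lt_succ_iff.mp x.isLt) hL, hxy.symm⟩
    classical
    obtain ⟨a, hab, hbL, hGab⟩ := Nat.find_spec hrep
    set b := Nat.find hrep with hbdef
    have hinj : ∀ x y, a ≤ x → x < b → a ≤ y → y < b → G x = G y → x = y := by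
      intro x y _ hx _ hy hxy
      by_contra hne
      rcases Ne.lt_or_gt hne with h | h
      · exact Nat.find_min hrep hy ⟨x, h, (le_of_lt hy).trans hbL, hxy⟩
      · exact Nat.find_min hrep hx ⟨y, h, (le_of_lt hx).trans hbL, hxy.symm⟩
    set d := b - a with hddef
    have hd1 : 1 ≤ d := by omega
    have hadb : a + d = b := by omega
    have hba : b - a = d - 1 + 1 := by omega
    -- the cut cycle has product ≤ 1
    have hcycle : ∏ t ∈ Finset.Ico a b, (A (G t) (G (t + 1)) / c) ≤ 1 := by
      set g : Fin (d - 1 + 1) → Fin n := fun t => G (a + t.val) with hg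
      have hginj : Function.Injective g := by
        intro x y hxy
        have := hinj (a + x.val) (a + y.val) (Nat.le_add_right _ _) (by omega)
          (Nat.le_add_right _ _) (by omega) hxy
        exact Fin.ext (by omega)
      have hprod : ∏ t ∈ Finset.Ico a b, A (G t) (G (t + 1))
          = ∏ j : Fin (d - 1 + 1), A (g j) (g (j + 1)) := by
        rw [Finset.prod_Ico_eq_prod_range, hba, ← Fin.prod_univ_eq_prod_range
          (fun s => A (G (a + s)) (G (a + s + 1))) (d - 1 + 1)]
        refine Finset.prod_congr rfl fun j _ => ?_
        have hgj : g j = G (a + j.val) := rfl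
        have hgj1 : g (j + 1) = G (a + j.val + 1) := by
          rcases eq_or_ne j (Fin.last (d - 1)) with h | h
          · have : (j + 1 : Fin (d - 1 + 1)) = 0 := by
              rw [h]; exact Fin.last_add_one _
            rw [this, h]
            show G (a + 0) = G (a + (d - 1) + 1)
            have : a + (d - 1) + 1 = b := by omega
            rw [this, Nat.add_zero, hGab]
          · have hv : ((j + 1 : Fin (d - 1 + 1)) : ℕ) = j.val + 1 := by
              rw [Fin.val_add_one_of_lt (lt_of_le_of_ne (Fin.le_last j) h)]
            exact congrArg G (by omega)
        rw [hgj, hgj1]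
      have hle := hcyc (d - 1) g hginj
      rw [← hprod] at hle
      rw [Finset.prod_div_distrib, Finset.prod_const, Nat.card_Ico, hba]
      rw [div_le_one (by positivity)]
      exact hle
    -- cut the cycle out
    set L' := L - d with hL'def
    have haL' : a ≤ L' := by omega
    have hL'L : L' + d = L := by omega
    set H : ℕ → Fin n := fun t => if t < a then G t else G (t + d) with hH
    have hHL' : H L' = G L := by
      show (if L' < a then G L' else G (L' + d)) = G L
      rw [if_neg (not_lt.mpr haL'), hL'L]
    have hle : wp A c G L ≤ wp A c H L' := by
      have e1 : wp A c G L = (∏ t ∈ Finset.range a, (A (G t) (G (t + 1)) / c)) *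
          (∏ t ∈ Finset.Ico a b, (A (G t) (G (t + 1)) / c)) *
          (∏ t ∈ Finset.Ico b L, (A (G t) (G (t + 1)) / c)) := by
        rw [wp, ← Finset.prod_range_mul_prod_Ico _ (show a ≤ L by omega),
          ← Finset.prod_Ico_consecutive _ (show a ≤ b by omega) (show b ≤ L by omega)]
        ring
      have e2 : wp A c H L' = (∏ t ∈ Finset.range a, (A (G t) (G (t + 1)) / c)) *
          (∏ t ∈ Finset.Ico b L, (A (G t) (G (t + 1)) / c)) := by
        rw [wp, ← Finset.prod_range_mul_prod_Ico _ haL']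
        congr 1
        · refine Finset.prod_congr rfl fun t ht => ?_
          rw [Finset.mem_range] at ht
          have h1 : H t = G t := by
            show (if t < a then G t else G (t + d)) = G t
            rw [if_pos ht]
          have h2 : H (t + 1) = G (t + 1) := by
            show (if t + 1 < a then G (t + 1) else G (t + 1 + d)) = G (t + 1)
            rcases lt_or_eq_of_le (Nat.succ_le_of_lt ht) with h | h
            · rw [if_pos h]
            · rw [if_neg (by omega), show t + 1 + d = b by omega, ← hGab]
              exact congrArg G h.symm
          rw [h1, h2]
        · rw [Finset.prod_Ico_eq_prod_range, Finset.prod_Ico_eq_prod_range]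
          have : L' - a = L - b := by omega
          rw [this]
          refine Finset.prod_congr rfl fun s hs => ?_
          have h1 : H (a + s) = G (b + s) := by
            show (if a + s < a then G (a + s) else G (a + s + d)) = G (b + s)
            rw [if_neg (by omega)]
            exact congrArg G (by omega)
          have h2 : H (a + s + 1) = G (b + s + 1) := by
            show (if a + s + 1 < a then G (a + s + 1) else G (a + s + 1 + d)) = G (b + s + 1)
            rw [if_neg (by omega)]
            exact congrArg G (by omega)
          rw [h1, h2]
      rw [e1, e2]
      have hnn1 : 0 ≤ ∏ t ∈ Finset.range a, (A (G t) (G (t + 1)) / c) :=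
        Finset.prod_nonneg fun t _ => div_nonneg (hA _ _) hc.le
      have hnn3 : 0 ≤ ∏ t ∈ Finset.Ico b L, (A (G t) (G (t + 1)) / c) :=
        Finset.prod_nonneg fun t _ => div_nonneg (hA _ _) hc.le
      calc (∏ t ∈ Finset.range a, (A (G t) (G (t + 1)) / c)) *
          (∏ t ∈ Finset.Ico a b, (A (G t) (G (t + 1)) / c)) *
          (∏ t ∈ Finset.Ico b L, (A (G t) (G (t + 1)) / c))
          ≤ (∏ t ∈ Finset.range a, (A (G t) (G (t + 1)) / c)) * 1 *
          (∏ t ∈ Finset.Ico b L, (A (G t) (G (t + 1)) / c)) := by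
            apply mul_le_mul_of_nonneg_right _ hnn3
            exact mul_le_mul_of_nonneg_left hcycle hnn1
        _ = _ := by ring
    obtain ⟨k, H', hk, hH', hle'⟩ := IH L' (by omega) H
    exact ⟨k, H', hk, by rw [hH', hHL'], le_trans hle hle'⟩

/-- potential: best walk value ending at `j` over walks of length `< n` -/
noncomputable def pfun (j : Fin n) : ℝ :=
  Finset.univ.sup'
    (by haveI : Nonempty (Fin n × (Fin n → Fin n)) :=
          ⟨⟨⟨0, hn⟩, fun _ => ⟨0, hn⟩⟩⟩
        exact Finset.univ_nonempty)
    (fun q : Fin n × (Fin n → Fin n) =>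
      if (fun t : ℕ => q.2 ⟨t % n, Nat.mod_lt t hn⟩) q.1.val = j
      then wp A c (fun t : ℕ => q.2 ⟨t % n, Nat.mod_lt t hn⟩) q.1.val else 0)

theorem pfun_ge_one (j : Fin n) : 1 ≤ pfun hn A c j := by
  have h := Finset.le_sup' (f := fun q : Fin n × (Fin n → Fin n) =>
      if (fun t : ℕ => q.2 ⟨t % n, Nat.mod_lt t hn⟩) q.1.val = j
      then wp A c (fun t : ℕ => q.2 ⟨t % n, Nat.mod_lt t hn⟩) q.1.val else 0)
    (b := (⟨⟨0, hn⟩, fun _ => j⟩ : Fin n × (Fin n → Fin n)))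
    (Finset.mem_univ _)
  simp only [if_pos rfl] at h
  refine le_trans (le_of_eq ?_) h
  rw [wp]
  simp

theorem pfun_pos (j : Fin n) : 0 < pfun hn A c j :=
  lt_of_lt_of_le one_pos (pfun_ge_one hn A c j)

theorem walk_le_pfun (G : ℕ → Fin n) (k : ℕ) (hk : k < n) (j : Fin n) (hGk : G k = j) :
    wp A c G k ≤ pfun hn A c j := by
  set q : Fin n × (Fin n → Fin n) := ⟨⟨k, hk⟩, fun t => G t.val⟩ with hq
  have hlift : ∀ t ≤ k, (fun t : ℕ => q.2 ⟨t % n, Nat.mod_lt t hn⟩) t = G t := by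
    intro t ht
    show G ((⟨t % n, Nat.mod_lt t hn⟩ : Fin n) : ℕ) = G t
    exact congrArg G (by simp [Nat.mod_eq_of_lt (lt_of_le_of_lt ht hk)])
  have h := Finset.le_sup' (f := fun q : Fin n × (Fin n → Fin n) =>
      if (fun t : ℕ => q.2 ⟨t % n, Nat.mod_lt t hn⟩) q.1.val = j
      then wp A c (fun t : ℕ => q.2 ⟨t % n, Nat.mod_lt t hn⟩) q.1.val else 0)
    (b := q) (Finset.mem_univ _)
  rw [if_pos (by rw [hlift k le_rfl]; exact hGk)] at h
  exact le_trans (le_of_eq (wp_congr A c (fun t ht => (hlift t ht).symm))) h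

theorem pfun_eq_walk (j : Fin n) : ∃ (G : ℕ → Fin n) (k : ℕ),
    k < n ∧ G k = j ∧ pfun hn A c j = wp A c G k := by
  obtain ⟨q, -, hq⟩ := Finset.exists_mem_eq_sup' (s := (Finset.univ :
      Finset (Fin n × (Fin n → Fin n))))
    (by haveI : Nonempty (Fin n × (Fin n → Fin n)) := ⟨⟨⟨0, hn⟩, fun _ => ⟨0, hn⟩⟩⟩
        exact Finset.univ_nonempty)
    (fun q : Fin n × (Fin n → Fin n) =>
      if (fun t : ℕ => q.2 ⟨t % n, Nat.mod_lt t hn⟩) q.1.val = j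
      then wp A c (fun t : ℕ => q.2 ⟨t % n, Nat.mod_lt t hn⟩) q.1.val else 0)
  by_cases hcond : (fun t : ℕ => q.2 ⟨t % n, Nat.mod_lt t hn⟩) q.1.val = j
  · refine ⟨fun t : ℕ => q.2 ⟨t % n, Nat.mod_lt t hn⟩, q.1.val, q.1.isLt, hcond, ?_⟩
    rw [pfun, hq, if_pos hcond]
  · exfalso
    have h1 := pfun_ge_one hn A c j
    rw [pfun, hq, if_neg hcond] at h1
    linarith

include hA hc hcyc in
theorem pfun_key (i j : Fin n) :
    pfun hn A c i * (A i j / c) ≤ pfun hn A c j := by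
  obtain ⟨G, k, hk, hGk, hpi⟩ := pfun_eq_walk hn A c i
  set G' : ℕ → Fin n := fun t => if t ≤ k then G t else j with hG'
  have hstep : wp A c G' (k + 1) = wp A c G k * (A i j / c) := by
    rw [wp, Finset.prod_range_succ]
    have e1 : (∏ t ∈ Finset.range k, (A (G' t) (G' (t + 1)) / c)) = wp A c G k := by
      refine (wp_congr A c (fun t ht => ?_)).symm
      show G t = if t ≤ k then G t else j
      rw [if_pos ht]
    have e2 : G' k = i := by
      show (if k ≤ k then G k else j) = i
      rw [if_pos le_rfl]; exact hGk
    have e3 : G' (k + 1) = j := by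
      show (if k + 1 ≤ k then G (k + 1) else j) = j
      rw [if_neg (by omega)]
    rw [show (∏ t ∈ Finset.range k, (A (G' t) (G' (t + 1)) / c)) = wp A c G k from e1,
      e2, e3]
  obtain ⟨k', H, hk', hH, hle⟩ := wp_reduce hn A hA c hc hcyc (k + 1) G'
  have hG'k1 : G' (k + 1) = j := by
    show (if k + 1 ≤ k then G (k + 1) else j) = j
    rw [if_neg (by omega)]
  calc pfun hn A c i * (A i j / c) = wp A c G' (k + 1) := by rw [hpi, hstep]
    _ ≤ wp A c H k' := hle
    _ ≤ pfun hn A c j := walk_le_pfun hn A c H k' hk' j (by rw [hH, hG'k1])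

include hn hA hc hcyc in
theorem exists_scaling : ∃ p : Fin n → ℝ, (∀ i, 0 < p i) ∧
    ∀ i j, p i * A i j * (p j)⁻¹ ≤ c := by
  refine ⟨pfun hn A c, pfun_pos hn A c, fun i j => ?_⟩
  have h := pfun_key hn A hA c hc hcyc i j
  have hpj := pfun_pos hn A c j
  rw [mul_div_assoc', div_le_iff₀ hc] at h
  rw [mul_inv_le_iff₀ hpj]
  linarith [h]
end Walks


/-- Spectral radius of a real matrix: the supremum of the absolute values of the
(complex) roots of its characteristic polynomial. -/
noncomputable def specRad {n : Type*} [Fintype n] [DecidableEq n]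
    (A : Matrix n n ℝ) : ℝ :=
  sSup {r : ℝ | ∃ μ : ℂ, ((A.map (algebraMap ℝ ℂ)).charpoly).IsRoot μ ∧ r = ‖μ‖}


open Matrix

section Spectral

attribute [local instance] Matrix.linftyOpNormedRing Matrix.linftyOpNormedAlgebra

variable {N : Type*} [Fintype N] [DecidableEq N]

noncomputable instance : CompleteSpace (Matrix N N ℂ) := FiniteDimensional.complete ℂ _

theorem root_iff_spectrum (M : Matrix N N ℂ) (μ : ℂ) :
    M.charpoly.IsRoot μ ↔ μ ∈ spectrum ℂ M := by
  have h1 : M.charpoly.eval μ = (Matrix.diagonal (fun _ => μ) - M).det := by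
    have h := ((Polynomial.evalRingHom μ).map_det M.charmatrix).symm
    simp only [RingHom.mapMatrix_apply, Polynomial.coe_evalRingHom] at h
    rw [Matrix.charpoly, ← h]
    congr 1
    ext i j
    by_cases h : i = j <;>
      simp [h, Matrix.charmatrix_apply, Matrix.diagonal_apply, Matrix.map_apply, Matrix.sub_apply]
  have h2 : (diagonal ((algebraMap ℂ (N → ℂ)) μ) : Matrix N N ℂ)
      = Matrix.diagonal (fun _ => μ) := by
    simp [Pi.algebraMap_def]
  rw [spectrum.mem_iff, Polynomial.IsRoot, h1, Matrix.algebraMap_eq_diagonal, h2,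
    Matrix.isUnit_iff_isUnit_det]
  simp [isUnit_iff_ne_zero]

theorem nnnorm_mono_of_entry (X Y : Matrix N N ℂ) (h : ∀ i j, ‖X i j‖₊ ≤ ‖Y i j‖₊) :
    ‖X‖₊ ≤ ‖Y‖₊ := by
  rw [Matrix.linfty_opNNNorm_def, Matrix.linfty_opNNNorm_def]
  exact Finset.sup_mono_fun fun i _ => Finset.sum_le_sum fun j _ => h i j

theorem specRadius_mono (X Y : Matrix N N ℂ) (h : ∀ k : ℕ, ‖X ^ k‖₊ ≤ ‖Y ^ k‖₊) :
    spectralRadius ℂ X ≤ spectralRadius ℂ Y := by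
  refine le_of_tendsto_of_tendsto'
    (spectrum.pow_nnnorm_pow_one_div_tendsto_nhds_spectralRadius X)
    (spectrum.pow_nnnorm_pow_one_div_tendsto_nhds_spectralRadius Y)
    (fun k => ?_)
  exact ENNReal.rpow_le_rpow (by exact_mod_cast h k) (by positivity)

/-- entrywise absolute dominance passes to powers -/
theorem abs_pow_entry_le (B C : Matrix N N ℝ) (hBC : ∀ i j, |B i j| ≤ C i j) :
    ∀ k i j, |(B ^ k) i j| ≤ (C ^ k) i j := by
  intro k
  induction k with
  | zero =>
    intro i j
    by_cases h : i = j <;> simp [pow_zero, Matrix.one_apply, h]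
  | succ k ih =>
    intro i j
    rw [pow_succ, pow_succ, Matrix.mul_apply, Matrix.mul_apply]
    refine le_trans (Finset.abs_sum_le_sum_abs _ _) (Finset.sum_le_sum fun l _ => ?_)
    rw [abs_mul]
    exact mul_le_mul (ih i l) (hBC l j) (abs_nonneg _) (le_trans (abs_nonneg _) (ih i l))

theorem map_pow_nnnorm_le (B C : Matrix N N ℝ) (hBC : ∀ i j, |B i j| ≤ C i j) (k : ℕ) :
    ‖(B.map (algebraMap ℝ ℂ)) ^ k‖₊ ≤ ‖(C.map (algebraMap ℝ ℂ)) ^ k‖₊ := by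
  have hmap : ∀ (M : Matrix N N ℝ) (k : ℕ),
      (M.map (algebraMap ℝ ℂ)) ^ k = (M ^ k).map (algebraMap ℝ ℂ) := by
    intro M k
    have := map_pow ((algebraMap ℝ ℂ).mapMatrix) M k
    simpa [RingHom.mapMatrix_apply] using this.symm
  rw [hmap, hmap]
  refine nnnorm_mono_of_entry _ _ fun i j => ?_
  simp only [Matrix.map_apply, Complex.coe_algebraMap, Complex.nnnorm_real]
  have h := abs_pow_entry_le B C hBC k i j
  have hpos : 0 ≤ (C ^ k) i j := le_trans (abs_nonneg _) h
  rw [← NNReal.coe_le_coe, coe_nnnorm, coe_nnnorm, Real.norm_eq_abs, Real.norm_eq_abs,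
    abs_of_nonneg hpos]
  exact h

theorem specRadius_smul (c : ℝ) (hc : 0 ≤ c) (Y : Matrix N N ℂ) :
    spectralRadius ℂ ((c : ℂ) • Y) = ENNReal.ofReal c * spectralRadius ℂ Y := by
  have h1 := spectrum.pow_nnnorm_pow_one_div_tendsto_nhds_spectralRadius ((c : ℂ) • Y)
  have h2 := spectrum.pow_nnnorm_pow_one_div_tendsto_nhds_spectralRadius Y
  have h3 : Filter.Tendsto (fun k : ℕ => ENNReal.ofReal c * ((‖Y ^ k‖₊ : ENNReal) ^ (1 / (k : ℝ))))
      Filter.atTop (nhds (ENNReal.ofReal c * spectralRadius ℂ Y)) :=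
    ENNReal.Tendsto.const_mul h2 (Or.inr ENNReal.ofReal_ne_top)
  refine tendsto_nhds_unique h1 (h3.congr' ?_)
  filter_upwards [Filter.eventually_ge_atTop 1] with k hk
  have hk0 : (k : ℝ) ≠ 0 := Nat.cast_ne_zero.mpr (by omega)
  rw [smul_pow, nnnorm_smul, ENNReal.coe_mul, ENNReal.mul_rpow_of_nonneg _ _ (by positivity)]
  congr 1
  rw [nnnorm_pow, Complex.nnnorm_real, ENNReal.coe_pow, ← ENNReal.rpow_natCast _ k,
    ← ENNReal.rpow_mul, mul_one_div_cancel hk0, ENNReal.rpow_one,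
    ← enorm_eq_nnnorm, Real.enorm_eq_ofReal hc]

theorem specRadius_le_ofReal_specRad [Nonempty N] (M : Matrix N N ℝ) :
    spectralRadius ℂ (M.map (algebraMap ℝ ℂ)) ≤ ENNReal.ofReal (specRad M) := by
  have hbdd : BddAbove {r : ℝ | ∃ μ : ℂ,
      ((M.map (algebraMap ℝ ℂ)).charpoly).IsRoot μ ∧ r = ‖μ‖} := by
    have hfin : Set.Finite {μ : ℂ | ((M.map (algebraMap ℝ ℂ)).charpoly).IsRoot μ} :=
      Polynomial.finite_setOf_isRoot (Matrix.charpoly_monic _).ne_zero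
    have : {r : ℝ | ∃ μ : ℂ, ((M.map (algebraMap ℝ ℂ)).charpoly).IsRoot μ ∧ r = ‖μ‖}
        = (fun μ : ℂ => ‖μ‖) '' {μ : ℂ | ((M.map (algebraMap ℝ ℂ)).charpoly).IsRoot μ} := by
      ext r; constructor
      · rintro ⟨μ, h1, rfl⟩; exact ⟨μ, h1, rfl⟩
      · rintro ⟨μ, h1, rfl⟩; exact ⟨μ, h1, rfl⟩
    rw [this]
    exact (hfin.image _).bddAbove
  rw [spectralRadius]
  refine iSup₂_le fun μ hμ => ?_
  rw [← enorm_eq_nnnorm, ← ofReal_norm]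
  refine ENNReal.ofReal_le_ofReal ?_
  exact le_csSup hbdd ⟨μ, (root_iff_spectrum _ _).mpr hμ, rfl⟩

theorem roots_nonempty [Nonempty N] (M : Matrix N N ℝ) :
    ∃ μ : ℂ, ((M.map (algebraMap ℝ ℂ)).charpoly).IsRoot μ := by
  apply IsAlgClosed.exists_root
  have hd : ((M.map (algebraMap ℝ ℂ)).charpoly).natDegree = Fintype.card N :=
    Matrix.charpoly_natDegree_eq_dim _
  intro h
  have h0 : ((M.map (algebraMap ℝ ℂ)).charpoly).natDegree = 0 := by
    rw [Polynomial.natDegree_eq_zero_iff_degree_le_zero, h]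
  rw [hd] at h0
  exact absurd h0 (Nat.pos_iff_ne_zero.mp Fintype.card_pos)

end Spectral

section SpectralExtra
attribute [local instance] Matrix.linftyOpNormedRing Matrix.linftyOpNormedAlgebra
variable {N : Type*} [Fintype N] [DecidableEq N]

theorem specRad_bddAbove (M : Matrix N N ℝ) : BddAbove {r : ℝ | ∃ μ : ℂ,
    ((M.map (algebraMap ℝ ℂ)).charpoly).IsRoot μ ∧ r = ‖μ‖} := by
  have hfin : Set.Finite {μ : ℂ | ((M.map (algebraMap ℝ ℂ)).charpoly).IsRoot μ} :=
    Polynomial.finite_setOf_isRoot (Matrix.charpoly_monic _).ne_zero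
  have he : {r : ℝ | ∃ μ : ℂ, ((M.map (algebraMap ℝ ℂ)).charpoly).IsRoot μ ∧ r = ‖μ‖}
      = (fun μ : ℂ => ‖μ‖) '' {μ : ℂ | ((M.map (algebraMap ℝ ℂ)).charpoly).IsRoot μ} := by
    ext r; constructor
    · rintro ⟨μ, h1, rfl⟩; exact ⟨μ, h1, rfl⟩
    · rintro ⟨μ, h1, rfl⟩; exact ⟨μ, h1, rfl⟩
  rw [he]
  exact (hfin.image _).bddAbove

theorem specRad_nonneg [Nonempty N] (M : Matrix N N ℝ) : 0 ≤ specRad M := by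
  obtain ⟨μ, hμ⟩ := roots_nonempty M
  exact le_trans (norm_nonneg μ) (le_csSup (specRad_bddAbove M) ⟨μ, hμ, rfl⟩)
end SpectralExtra

section MainProof
attribute [local instance] Matrix.linftyOpNormedRing Matrix.linftyOpNormedAlgebra
open Matrix

/-- Friedland's upper bound `ρ(A) ≤ ρ(S(A)) μ*(A)` for a nonnegative matrix `A`.
Here `S(A)` is the 0-1 sign pattern of `A`, and `μ*(A)` is the maximum, over all cycles
`f 0 → ⋯ → f m → f 0` through distinct indices, of the geometric mean
`(Π_j A (f j) (f (j+1)))^{1/(m+1)}` of the entries of `A` along the cycle; `μs` below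
is characterized as this maximum (it bounds every cycle mean and is attained). -/
theorem specRad_le_sign_mul_max_cycle_mean (n : ℕ) (A : Matrix (Fin n) (Fin n) ℝ)
    (hA : ∀ i j, 0 ≤ A i j) (μs : ℝ)
    (hub : ∀ (m : ℕ) (f : Fin (m + 1) → Fin n), Function.Injective f →
      (∏ j : Fin (m + 1), A (f j) (f (j + 1))) ^ ((1 : ℝ) / (m + 1)) ≤ μs)
    (hmem : ∃ (m : ℕ) (f : Fin (m + 1) → Fin n), Function.Injective f ∧
      (∏ j : Fin (m + 1), A (f j) (f (j + 1))) ^ ((1 : ℝ) / (m + 1)) = μs) :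
    specRad A ≤
      specRad (Matrix.of fun i j : Fin n => if A i j = 0 then (0 : ℝ) else 1) * μs := by
  classical
  rcases Nat.eq_zero_or_pos n with hn0 | hn
  · subst hn0
    obtain ⟨m, f, -, -⟩ := hmem
    exact (f 0).elim0
  haveI : Nonempty (Fin n) := ⟨⟨0, hn⟩⟩
  set S : Matrix (Fin n) (Fin n) ℝ :=
    Matrix.of (fun i j : Fin n => if A i j = 0 then (0 : ℝ) else 1) with hSdef
  have hμs0 : 0 ≤ μs := by
    obtain ⟨m, f, hf, heq⟩ := hmem
    rw [← heq]
    exact Real.rpow_nonneg (Finset.prod_nonneg fun j _ => hA _ _) _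
  have hSnn : 0 ≤ specRad S := specRad_nonneg S
  rw [specRad]
  refine csSup_le ?_ ?_
  · obtain ⟨μ, hμ⟩ := roots_nonempty A
    exact ⟨‖μ‖, μ, hμ, rfl⟩
  rintro r ⟨μ, hroot, rfl⟩
  refine le_of_forall_pos_le_add fun δ hδ => ?_
  set ε := δ / (specRad S + 1) with hε
  have hεpos : 0 < ε := div_pos hδ (by linarith)
  set c := μs + ε with hcdef
  have hcpos : 0 < c := by rw [hcdef]; linarith
  have hcyc : ∀ (m : ℕ) (f : Fin (m + 1) → Fin n), Function.Injective f →
      (∏ j : Fin (m + 1), A (f j) (f (j + 1))) ≤ c ^ (m + 1) := by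
    intro m f hf
    have h := hub m f hf
    have hx : 0 ≤ ∏ j : Fin (m + 1), A (f j) (f (j + 1)) :=
      Finset.prod_nonneg fun j _ => hA _ _
    have hxe : (∏ j : Fin (m + 1), A (f j) (f (j + 1)))
        = ((∏ j : Fin (m + 1), A (f j) (f (j + 1))) ^ ((1 : ℝ) / (m + 1))) ^ (m + 1 : ℕ) := by
      rw [← Real.rpow_natCast ((∏ j : Fin (m + 1), A (f j) (f (j + 1))) ^ ((1 : ℝ) / (m + 1)))
        (m + 1), ← Real.rpow_mul hx]
      rw [show (1 : ℝ) / (m + 1) * ((m + 1 : ℕ) : ℝ) = 1 by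
        push_cast; field_simp]
      rw [Real.rpow_one]
    rw [hxe]
    exact pow_le_pow_left₀ (Real.rpow_nonneg hx _) (by rw [hcdef]; linarith) _
  obtain ⟨p, hp, hkey⟩ := exists_scaling hn A hA c hcpos hcyc
  set B : Matrix (Fin n) (Fin n) ℝ :=
    Matrix.of (fun i j : Fin n => p i * A i j * (p j)⁻¹) with hBdef
  have hBS : ∀ i j, |B i j| ≤ (c • S) i j := by
    intro i j
    rw [Matrix.smul_apply]
    by_cases h : A i j = 0
    · have hS0 : S i j = 0 := by simp [hSdef, h]
      have hB0 : B i j = 0 := by simp [hBdef, h]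
      rw [hS0, hB0, smul_zero, abs_zero]
    · have hSij : S i j = 1 := by simp [hSdef, h]
      rw [hSij, smul_eq_mul, mul_one]
      have hBnn : 0 ≤ B i j := by
        have := mul_nonneg (mul_nonneg (hp i).le (hA i j)) (inv_nonneg.mpr (hp j).le)
        simpa [hBdef] using this
      rw [abs_of_nonneg hBnn]
      simpa [hBdef] using hkey i j
  have hu1 : (Matrix.diagonal (fun i => (p i : ℂ))) *
      (Matrix.diagonal fun i => ((p i : ℝ)⁻¹ : ℂ)) = 1 := by
    have he : ∀ i, (p i : ℂ) * ((p i : ℝ)⁻¹ : ℂ) = 1 := fun i => by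
      push_cast
      exact mul_inv_cancel₀ (by exact_mod_cast (hp i).ne')
    simp only [Matrix.diagonal_mul_diagonal, he, Matrix.diagonal_one]
  have hu2 : (Matrix.diagonal fun i => ((p i : ℝ)⁻¹ : ℂ)) *
      (Matrix.diagonal (fun i => (p i : ℂ))) = 1 := by
    have he : ∀ i, ((p i : ℝ)⁻¹ : ℂ) * (p i : ℂ) = 1 := fun i => by
      push_cast
      exact inv_mul_cancel₀ (by exact_mod_cast (hp i).ne')
    simp only [Matrix.diagonal_mul_diagonal, he, Matrix.diagonal_one]
  set u : (Matrix (Fin n) (Fin n) ℂ)ˣ :=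
    ⟨Matrix.diagonal (fun i => (p i : ℂ)),
     Matrix.diagonal fun i => ((p i : ℝ)⁻¹ : ℂ), hu1, hu2⟩ with hudef
  have hBu : B.map (algebraMap ℝ ℂ) = (u : Matrix (Fin n) (Fin n) ℂ) *
      (A.map (algebraMap ℝ ℂ)) * ((u⁻¹ : (Matrix (Fin n) (Fin n) ℂ)ˣ) :
        Matrix (Fin n) (Fin n) ℂ) := by
    have hui : ((u⁻¹ : (Matrix (Fin n) (Fin n) ℂ)ˣ) : Matrix (Fin n) (Fin n) ℂ)
        = Matrix.diagonal fun i => ((p i : ℝ)⁻¹ : ℂ) := rfl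
    have huv : (u : Matrix (Fin n) (Fin n) ℂ)
        = Matrix.diagonal (fun i => (p i : ℂ)) := rfl
    rw [hui, huv]
    ext i j
    rw [Matrix.mul_diagonal, Matrix.diagonal_mul, Matrix.map_apply, Matrix.map_apply]
    show ((p i * A i j * (p j)⁻¹ : ℝ) : ℂ) = _
    simp only [Complex.coe_algebraMap]
    push_cast
    ring
  have hspec : spectralRadius ℂ (A.map (algebraMap ℝ ℂ))
      = spectralRadius ℂ (B.map (algebraMap ℝ ℂ)) := by
    rw [spectralRadius, spectralRadius, hBu, spectrum.units_conjugate]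
  have hcS : (c • S).map (algebraMap ℝ ℂ) = (c : ℂ) • (S.map (algebraMap ℝ ℂ)) := by
    ext i j
    simp [Matrix.smul_apply, Matrix.map_apply]
  have chain : (‖μ‖₊ : ENNReal) ≤ ENNReal.ofReal (specRad S * c) := by
    calc (‖μ‖₊ : ENNReal) ≤ spectralRadius ℂ (A.map (algebraMap ℝ ℂ)) := by
          rw [spectralRadius]
          exact le_iSup₂ (f := fun k (_ : k ∈ spectrum ℂ (A.map (algebraMap ℝ ℂ))) =>
            (‖k‖₊ : ENNReal)) μ ((root_iff_spectrum _ _).mp hroot)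
      _ = spectralRadius ℂ (B.map (algebraMap ℝ ℂ)) := hspec
      _ ≤ spectralRadius ℂ ((c • S).map (algebraMap ℝ ℂ)) :=
          specRadius_mono _ _ (map_pow_nnnorm_le B (c • S) hBS)
      _ = spectralRadius ℂ ((c : ℂ) • (S.map (algebraMap ℝ ℂ))) := by rw [hcS]
      _ = ENNReal.ofReal c * spectralRadius ℂ (S.map (algebraMap ℝ ℂ)) :=
          specRadius_smul c hcpos.le _
      _ ≤ ENNReal.ofReal c * ENNReal.ofReal (specRad S) :=
          mul_le_mul_right (specRadius_le_ofReal_specRad S) _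
      _ = ENNReal.ofReal (specRad S * c) := by
          rw [← ENNReal.ofReal_mul hcpos.le, mul_comm]
  have habs : ‖μ‖ ≤ specRad S * c := by
    rw [← enorm_eq_nnnorm, ← ofReal_norm] at chain
    exact (ENNReal.ofReal_le_ofReal_iff (mul_nonneg hSnn hcpos.le)).mp chain
  have hfin : specRad S * ε ≤ δ := by
    have h1 : specRad S * ε ≤ (specRad S + 1) * ε := by nlinarith
    have h2 : (specRad S + 1) * ε = δ := by
      rw [hε, mul_div_cancel₀ _ (by linarith : specRad S + 1 ≠ 0)]
    linarith
  calc ‖μ‖ ≤ specRad S * c := habs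
    _ = specRad S * μs + specRad S * ε := by rw [hcdef]; ring
    _ ≤ specRad S * μs + δ := by linarith
end MainProof
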